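/- Let X be a locally compact Hausdorff space with Borel σ-algebra B, and E a Dedekind complete vector lattice. If μ, ν are E̅⁺-valued Borel measures with ν ≤ μ, Δ ∈ B has μ(Δ) finite, and μ is inner regular at Δ (μ(Δ) = sup{μ(K) : K compact, K ⊆ Δ}), then ν is inner regular at Δ. -/

import Mathlib

variable {X : Type*} [TopologicalSpace X] [LocallyCompactSpace X] [T2Space X]
  [MeasurableSpace X] [BorelSpace X]
variable {E : Type*} [Lattice E] [AddCommGroup E]
  [CovariantClass E E (· + ·) (· ≤ ·)]

/-- An `E̅⁺`-valued (Borel) measure, `E̅ = WithTop E`. -/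
def IsEMeasure (μ : Set X → WithTop E) : Prop :=
  μ ∅ = 0 ∧ (∀ Δ, MeasurableSet Δ → 0 ≤ μ Δ) ∧
    ∀ Δ : ℕ → Set X, (∀ n, MeasurableSet (Δ n)) →
      Pairwise (Function.onFun Disjoint Δ) →
      IsLUB (Set.range fun N => ∑ n ∈ Finset.range N, μ (Δ n))
        (μ (⋃ n, Δ n))

omit [TopologicalSpace X] in
lemma IsEMeasure.union_eq {μ : Set X → WithTop E} (hμ : IsEMeasure μ)
    {A B : Set X} (hA : MeasurableSet A) (hB : MeasurableSet B)
    (hAB : Disjoint A B) : μ (A ∪ B) = μ A + μ B := by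
  classical
  set f : ℕ → Set X := fun n => if n = 0 then A else if n = 1 then B else ∅ with hf
  have hmeas : ∀ n, MeasurableSet (f n) := by
    intro n
    rcases n with _ | _ | n <;> simp [f, hA, hB]
  have hdisj : Pairwise (Function.onFun Disjoint f) := by
    intro i j hij
    unfold Function.onFun
    rcases i with _ | _ | i <;> rcases j with _ | _ | j <;>
      simp_all [f, Set.disjoint_empty, Set.empty_disjoint, hAB, hAB.symm]
  have hU : (⋃ n, f n) = A ∪ B := by
    ext x
    simp only [Set.mem_iUnion, Set.mem_union]
    constructor
    · rintro ⟨n, hn⟩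
      rcases n with _ | _ | n
      · left; simpa [f] using hn
      · right; simpa [f] using hn
      · simp [f] at hn
    · rintro (h | h)
      · exact ⟨0, by simpa [f] using h⟩
      · exact ⟨1, by simpa [f] using h⟩
  have h1 := hμ.2.2 f hmeas hdisj
  rw [hU] at h1
  have hsum2 : ∑ n ∈ Finset.range 2, μ (f n) = μ A + μ B := by
    simp [Finset.sum_range_succ, f]
  have hsum : ∀ N, 2 ≤ N → ∑ n ∈ Finset.range N, μ (f n) = μ A + μ B := by
    intro N hN
    induction N with
    | zero => omega
    | succ N ih =>
      rcases Nat.lt_or_ge N 2 with h | h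
      · interval_cases N
        · omega
        · exact hsum2
      · rw [Finset.sum_range_succ, ih (by omega)]
        have : f N = ∅ := by
          rcases N with _ | _ | N <;> simp_all [f]
        rw [this, hμ.1, add_zero]
  have hApos : 0 ≤ μ A := hμ.2.1 A hA
  have hBpos : 0 ≤ μ B := hμ.2.1 B hB
  have h2 : IsLUB (Set.range fun N => ∑ n ∈ Finset.range N, μ (f n)) (μ A + μ B) := by
    constructor
    · rintro z ⟨N, rfl⟩
      rcases Nat.lt_or_ge N 2 with h | h
      · interval_cases N
        · simp only [Finset.range_zero, Finset.sum_empty]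
          calc (0 : WithTop E) ≤ μ A := hApos
            _ = μ A + 0 := (add_zero _).symm
            _ ≤ μ A + μ B := add_le_add_right hBpos _
        · simp only [Finset.sum_range_one]
          have : μ (f 0) = μ A := by simp [f]
          rw [this]
          calc μ A = μ A + 0 := (add_zero _).symm
            _ ≤ μ A + μ B := add_le_add_right hBpos _
      · exact (hsum N h).le
    · intro b hb
      simpa only [hsum2] using hb ⟨2, rfl⟩
  exact h1.unique h2

omit [TopologicalSpace X] in
lemma IsEMeasure.mono {μ : Set X → WithTop E} (hμ : IsEMeasure μ)
    {A B : Set X} (hA : MeasurableSet A) (hB : MeasurableSet B)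
    (hAB : A ⊆ B) : μ A ≤ μ B := by
  have h := hμ.union_eq hA (hB.diff hA) Set.disjoint_sdiff_right
  rw [Set.union_diff_cancel hAB] at h
  calc μ A = μ A + 0 := (add_zero _).symm
    _ ≤ μ A + μ (B \ A) := add_le_add_right (hμ.2.1 _ (hB.diff hA)) _
    _ = μ B := h.symm

theorem stmt_15 (hDed : ∀ T : Set E, T.Nonempty → BddAbove T → ∃ a, IsLUB T a)
    (μ ν : Set X → WithTop E) (hμ : IsEMeasure μ) (hν : IsEMeasure ν)
    (hle : ∀ Δ, MeasurableSet Δ → ν Δ ≤ μ Δ)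
    (Δ : Set X) (hΔ : MeasurableSet Δ) (hfin : μ Δ ≠ ⊤)
    (hinner : IsLUB {z : WithTop E | ∃ K, IsCompact K ∧ K ⊆ Δ ∧ z = μ K}
      (μ Δ)) :
    IsLUB {z : WithTop E | ∃ K, IsCompact K ∧ K ⊆ Δ ∧ z = ν K} (ν Δ) := by
  constructor
  · rintro z ⟨K, hK, hKΔ, rfl⟩
    exact hν.mono hK.isClosed.measurableSet hΔ hKΔ
  · intro b hb
    rcases eq_or_ne b ⊤ with rfl | hb'
    · exact le_top
    rcases WithTop.ne_top_iff_exists.mp hb' with ⟨b', rfl⟩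
    rcases WithTop.ne_top_iff_exists.mp hfin with ⟨m, hm⟩
    have hνfin : ν Δ ≠ ⊤ := ne_top_of_le_ne_top hfin (hle Δ hΔ)
    rcases WithTop.ne_top_iff_exists.mp hνfin with ⟨n, hn⟩
    -- key claim: every μ K is bounded by b' + m - n
    have key : ∀ z ∈ {z : WithTop E | ∃ K, IsCompact K ∧ K ⊆ Δ ∧ z = μ K},
        z ≤ (↑(b' + m - n) : WithTop E) := by
      rintro z ⟨K, hK, hKΔ, rfl⟩
      have hKm : MeasurableSet K := hK.isClosed.measurableSet
      have hμK : μ K ≠ ⊤ :=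
        ne_top_of_le_ne_top hfin (hμ.mono hKm hΔ hKΔ)
      rcases WithTop.ne_top_iff_exists.mp hμK with ⟨k, hk⟩
      have hνK : ν K ≠ ⊤ := ne_top_of_le_ne_top hμK (hle K hKm)
      rcases WithTop.ne_top_iff_exists.mp hνK with ⟨nk, hnk⟩
      -- μ Δ = μ K + μ (Δ \ K)
      have hsplitμ : μ Δ = μ K + μ (Δ \ K) := by
        have := hμ.union_eq hKm (hΔ.diff hKm) Set.disjoint_sdiff_right
        rwa [Set.union_diff_cancel hKΔ] at this
      have hsplitν : ν Δ = ν K + ν (Δ \ K) := by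
        have := hν.union_eq hKm (hΔ.diff hKm) Set.disjoint_sdiff_right
        rwa [Set.union_diff_cancel hKΔ] at this
      have hdfin : μ (Δ \ K) ≠ ⊤ := by
        intro h
        exact hfin (by rw [hsplitμ, h, WithTop.add_top])
      rcases WithTop.ne_top_iff_exists.mp hdfin with ⟨d, hd⟩
      have hmd : m = k + d := by
        have : (↑m : WithTop E) = ↑(k + d) := by
          rw [hm, hsplitμ, ← hk, ← hd, WithTop.coe_add]
        exact_mod_cast this
      -- ν Δ ≤ ν K + μ (Δ \ K)
      have h1 : ν Δ ≤ ν K + μ (Δ \ K) := by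
        rw [hsplitν]
        exact add_le_add_right (hle _ (hΔ.diff hKm)) (ν K)
      have hnle : n ≤ nk + d := by
        have : (↑n : WithTop E) ≤ ↑(nk + d) := by
          rw [hn, WithTop.coe_add, hnk, hd]; exact h1
        exact_mod_cast this
      have hnkb : nk ≤ b' := by
        have : ν K ≤ (↑b' : WithTop E) := hb ⟨K, hK, hKΔ, rfl⟩
        rw [← hnk] at this
        exact_mod_cast this
      have hnbd : n ≤ b' + d :=
        hnle.trans (by
          calc nk + d = d + nk := add_comm _ _
            _ ≤ d + b' := add_le_add_right hnkb _
            _ = b' + d := add_comm _ _)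
      have hkle : k ≤ b' + m - n := by
        have h2 : k - n + n ≤ k - n + (b' + d) := add_le_add_right hnbd _
        calc k = k - n + n := by abel
          _ ≤ k - n + (b' + d) := h2
          _ = b' + m - n := by rw [hmd]; abel
      rw [← hk]
      exact_mod_cast hkle
    have := hinner.2 key
    rw [← hm] at this
    have hmle : m ≤ b' + m - n := by exact_mod_cast this
    have : n ≤ b' := by
      have h2 : n - m + m ≤ n - m + (b' + m - n) := add_le_add_right hmle _
      calc n = n - m + m := by abel
        _ ≤ n - m + (b' + m - n) := h2
        _ = b' := by abel
    rw [← hn]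
    exact_mod_cast this
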